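/- Let Ω ⊂ ℝ^N be a bounded measurable set, s ∈ (0,1), p ∈ (1,∞). There is a constant C = C(N, s, p) > 0 such that for every function u ∈ L^p(ℝ^N) vanishing a.e. outside Ω, ∫_{ℝ^N}∫_{ℝ^N} |u(x) - u(y)|^p / |x - y|^{N+sp} dx dy ≥ (C / |Ω|^{sp/N}) · ∫_Ω |u(x)|^p dx. -/

import Mathlib

open MeasureTheory ENNReal

/-- Fractional Poincaré inequality: for `u ∈ L^p(ℝ^N)` vanishing a.e. outside a bounded
set `Ω`, the Gagliardo seminorm controls `(C/|Ω|^{sp/N}) ‖u‖_{L^p(Ω)}^p`. -/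
theorem fractional_poincare (N : ℕ) (hN : 0 < N) (s p : ℝ)
    (hs : s ∈ Set.Ioo (0 : ℝ) 1) (hp : 1 < p) :
    ∃ C : ℝ, 0 < C ∧
      ∀ (Ω : Set (Fin N → ℝ)), MeasurableSet Ω → Bornology.IsBounded Ω →
        ∀ u : (Fin N → ℝ) → ℝ, Measurable u →
          MemLp u (ENNReal.ofReal p) volume →
          (∀ᵐ x, x ∉ Ω → u x = 0) →
          ENNReal.ofReal (C / (volume Ω).toReal ^ (s * p / N)) *
              ∫⁻ x in Ω, ENNReal.ofReal (|u x| ^ p) ≤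
            ∫⁻ x, ∫⁻ y, ENNReal.ofReal (|u x - u y| ^ p / ‖x - y‖ ^ ((N : ℝ) + s * p)) := by
  have hN' : (0:ℝ) < N := by exact_mod_cast hN
  have hp0 : (0:ℝ) < p := lt_trans one_pos hp
  have hsp : 0 < s * p := mul_pos hs.1 hp0
  set e : ℝ := (N : ℝ) + s * p with he
  have hep : 0 < e := by positivity
  refine ⟨2 ^ ((1 - 1/(N:ℝ)) * e), by positivity, ?_⟩
  intro Ω hΩm hΩb u hum hup hu0
  obtain ⟨r, hr⟩ := hΩb.subset_closedBall 0
  have hΩfin : volume Ω ≠ ⊤ :=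
    ((measure_mono hr).trans_lt measure_closedBall_lt_top).ne
  set V : ℝ := (volume Ω).toReal with hVdef
  have hVΩ : ENNReal.ofReal V = volume Ω := ENNReal.ofReal_toReal hΩfin
  rcases eq_or_lt_of_le (ENNReal.toReal_nonneg : (0:ℝ) ≤ V) with hV0 | hV0
  · have hΩ0 : volume Ω = 0 := by
      rw [← hVΩ, hVdef, ← hV0, ENNReal.ofReal_zero]
    rw [setLIntegral_measure_zero Ω _ hΩ0, mul_zero]
    exact zero_le
  -- main case : V > 0
  have hVpos : 0 < V := hV0
  set C : ℝ := 2 ^ ((1 - 1/(N:ℝ)) * e) with hC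
  set R : ℝ := (2*V) ^ (1/(N:ℝ)) / 2 with hRdef
  have hR : 0 < R := by positivity
  have hRe : 0 < R ^ e := Real.rpow_pos_of_pos hR e
  -- volume of balls of radius R
  have hball : ∀ x : Fin N → ℝ, volume (Metric.ball x R) = 2 * volume Ω := by
    intro x
    rw [Real.volume_pi_ball x hR]
    have h2R : 2 * R = (2*V) ^ (1/(N:ℝ)) := by
      rw [hRdef]; ring
    rw [h2R, Fintype.card_fin]
    have : (((2*V) ^ (1/(N:ℝ)) : ℝ) ^ (N:ℕ)) = 2 * V := by
      rw [← Real.rpow_natCast ((2*V) ^ (1/(N:ℝ))) N, ← Real.rpow_mul (by positivity),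
        one_div, inv_mul_cancel₀ hN'.ne', Real.rpow_one]
    rw [this, ENNReal.ofReal_mul (by norm_num), hVΩ, ENNReal.ofReal_ofNat]
  -- key real identity
  have hkey : C / V ^ (s * p / (N:ℝ)) = V / R ^ e := by
    have hRe' : R ^ e = 2 ^ (e/(N:ℝ) - e) * V ^ (e/(N:ℝ)) := by
      rw [hRdef, Real.div_rpow (by positivity) (by norm_num),
        ← Real.rpow_mul (by positivity : (0:ℝ) ≤ 2*V),
        Real.mul_rpow (by norm_num) hV0.le, Real.rpow_sub (by norm_num : (0:ℝ) < 2)]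
      rw [one_div, inv_mul_eq_div]
      ring
    rw [div_eq_div_iff (Real.rpow_pos_of_pos hVpos _).ne' hRe.ne', hRe']
    have h1 : C * (2 ^ (e/(N:ℝ) - e) * V ^ (e/(N:ℝ))) = V ^ (e/(N:ℝ)) := by
      rw [hC, ← mul_assoc, ← Real.rpow_add (by norm_num : (0:ℝ) < 2)]
      have : (1 - 1/(N:ℝ)) * e + (e/(N:ℝ) - e) = 0 := by field_simp; ring
      rw [this, Real.rpow_zero, one_mul]
    rw [h1]
    have h2 : e/(N:ℝ) = 1 + s*p/(N:ℝ) := by field_simp; exact he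
    rw [h2, Real.rpow_add hVpos, Real.rpow_one]
  -- the good set
  set A : Set (Fin N → ℝ) := Ω ∪ {y | u y = 0} with hAdef
  have hAm : MeasurableSet A := hΩm.union (hum (measurableSet_singleton 0))
  have hAc : volume Aᶜ = 0 := by
    have hmem : ∀ᵐ y, y ∈ A := by
      filter_upwards [hu0] with y hy
      by_cases h : y ∈ Ω
      · exact Or.inl h
      · exact Or.inr (hy h)
    simpa [ae_iff, Set.compl_def] using hmem
  -- pointwise bound
  have key : ∀ x : Fin N → ℝ,
      ENNReal.ofReal (C / V ^ (s * p / (N:ℝ))) * ENNReal.ofReal (|u x| ^ p) ≤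
        ∫⁻ y, ENNReal.ofReal (|u x - u y| ^ p / ‖x - y‖ ^ e) := by
    intro x
    set S : Set (Fin N → ℝ) := (Ωᶜ ∩ Metric.ball x R) \ (Aᶜ ∪ {x}) with hSdef
    have hSm : MeasurableSet S :=
      ((hΩm.compl.inter measurableSet_ball).diff
        (hAm.compl.union (measurableSet_singleton x)))
    have hSvol : volume Ω ≤ volume S := by
      have hx0 : volume ({x} : Set (Fin N → ℝ)) = 0 := by
        rw [← Set.univ_pi_singleton x, volume_pi_pi]
        exact Finset.prod_eq_zero (Finset.mem_univ ⟨0, hN⟩) (measure_singleton _)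
      have h1 : volume S = volume (Ωᶜ ∩ Metric.ball x R) :=
        measure_diff_null (measure_union_null hAc hx0)
      have h2 : Metric.ball x R ⊆ (Ω ∩ Metric.ball x R) ∪ (Ωᶜ ∩ Metric.ball x R) := by
        intro y hy
        by_cases h : y ∈ Ω
        · exact Or.inl ⟨h, hy⟩
        · exact Or.inr ⟨h, hy⟩
      have h3 : 2 * volume Ω ≤ volume Ω + volume (Ωᶜ ∩ Metric.ball x R) := by
        calc 2 * volume Ω = volume (Metric.ball x R) := (hball x).symm
          _ ≤ volume (Ω ∩ Metric.ball x R) + volume (Ωᶜ ∩ Metric.ball x R) :=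
              (measure_mono h2).trans (measure_union_le _ _)
          _ ≤ volume Ω + volume (Ωᶜ ∩ Metric.ball x R) :=
              add_le_add (measure_mono Set.inter_subset_left) le_rfl
      rw [h1]
      have h4 : volume Ω + volume Ω ≤ volume Ω + volume (Ωᶜ ∩ Metric.ball x R) := by
        rw [← two_mul]; exact h3
      exact (ENNReal.add_le_add_iff_left hΩfin).mp h4
    have hpt : ∀ y ∈ S, ENNReal.ofReal (|u x| ^ p / R ^ e) ≤
        ENNReal.ofReal (|u x - u y| ^ p / ‖x - y‖ ^ e) := by
      intro y hy
      obtain ⟨⟨hyΩ, hyB⟩, hy2⟩ := hy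
      have hyA : y ∈ A := by
        by_contra h
        exact hy2 (Or.inl h)
      have hyx : y ≠ x := by
        intro h
        exact hy2 (Or.inr h)
      have huy : u y = 0 := by
        rcases hyA with h | h
        · exact absurd h hyΩ
        · exact h
      have hnorm : 0 < ‖x - y‖ := by
        rw [norm_pos_iff, sub_ne_zero]
        exact fun h => hyx h.symm
      have hnormR : ‖x - y‖ ≤ R := by
        rw [Metric.mem_ball, dist_comm] at hyB
        have : dist x y = ‖x - y‖ := by rw [dist_eq_norm]
        linarith [this ▸ hyB]
      apply ENNReal.ofReal_le_ofReal
      rw [huy, sub_zero]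
      exact div_le_div_of_nonneg_left (by positivity) (Real.rpow_pos_of_pos hnorm e)
        (Real.rpow_le_rpow hnorm.le hnormR hep.le)
    calc ENNReal.ofReal (C / V ^ (s * p / (N:ℝ))) * ENNReal.ofReal (|u x| ^ p)
        = ENNReal.ofReal (|u x| ^ p / R ^ e) * ENNReal.ofReal V := by
          rw [← ENNReal.ofReal_mul (by positivity), ← ENNReal.ofReal_mul (by positivity)]
          congr 1
          rw [hkey]
          field_simp
      _ ≤ ENNReal.ofReal (|u x| ^ p / R ^ e) * volume S := by
          gcongr
          rw [hVΩ]; exact hSvol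
      _ = ∫⁻ _ in S, ENNReal.ofReal (|u x| ^ p / R ^ e) := by
          rw [setLIntegral_const]
      _ ≤ ∫⁻ y in S, ENNReal.ofReal (|u x - u y| ^ p / ‖x - y‖ ^ e) :=
          setLIntegral_mono' hSm hpt
      _ ≤ ∫⁻ y, ENNReal.ofReal (|u x - u y| ^ p / ‖x - y‖ ^ e) :=
          setLIntegral_le_lintegral _ _
  -- put things together
  have hmeas : Measurable fun x => ENNReal.ofReal (|u x| ^ p) :=
    (((Real.continuous_rpow_const hp0.le).measurable.comp hum.abs)).ennreal_ofReal
  calc ENNReal.ofReal (C / V ^ (s * p / (N:ℝ))) * ∫⁻ x in Ω, ENNReal.ofReal (|u x| ^ p)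
      = ∫⁻ x in Ω, ENNReal.ofReal (C / V ^ (s * p / (N:ℝ))) * ENNReal.ofReal (|u x| ^ p) :=
        (lintegral_const_mul _ hmeas).symm
    _ ≤ ∫⁻ x in Ω, ∫⁻ y, ENNReal.ofReal (|u x - u y| ^ p / ‖x - y‖ ^ e) :=
        lintegral_mono fun x => key x
    _ ≤ ∫⁻ x, ∫⁻ y, ENNReal.ofReal (|u x - u y| ^ p / ‖x - y‖ ^ e) :=
        setLIntegral_le_lintegral _ _
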